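/- Fix b > −3/16 and set γ = 1 + (16/3)b (so γ > 0). Then the function s ↦ M(φ_{1,2s}) := ∫_ℝ Φ_{1,2s}(x)² dx, defined for s ∈ (−1, 1], is continuous, strictly increasing, and maps (−1, 1] bijectively onto (0, 4π/√γ]. -/

import Mathlib

open MeasureTheory Real Set

/-- The soliton profile of the derivative NLS after gauge transformation:
the algebraic profile when `c = 2√ω`, the bright profile when `-2√ω < c < 2√ω`. -/
noncomputable def Phi (γ ω c x : ℝ) : ℝ :=
  if c = 2 * Real.sqrt ω then
    Real.sqrt (4 * c / ((c * x) ^ 2 + γ))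
  else
    Real.sqrt (2 * (4 * ω - c ^ 2) /
      (Real.sqrt (c ^ 2 + γ * (4 * ω - c ^ 2)) * Real.cosh (Real.sqrt (4 * ω - c ^ 2) * x) - c))

/-- Mass of the soliton with parameters `(ω, c) = (1, 2s)`. -/
noncomputable def massCurve (γ s : ℝ) : ℝ := ∫ x : ℝ, (Phi γ 1 (2 * s) x) ^ 2

open Filter Topology

lemma cosh_quad (t : ℝ) : 1 + t^2/2 ≤ Real.cosh t := by
  have h2 : Real.cosh t = 1 + 2 * Real.sinh (t/2)^2 := by
    have h := Real.cosh_two_mul (t/2)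
    have h' : 2 * (t/2) = t := by ring
    rw [h'] at h
    rw [h, Real.cosh_sq]; ring
  have hs : (t/2)^2 ≤ Real.sinh (t/2)^2 := by
    rcases le_or_gt 0 (t/2) with h | h
    · nlinarith [Real.self_le_sinh_iff.mpr h]
    · have h1 : -(t/2) ≤ Real.sinh (-(t/2)) := Real.self_le_sinh_iff.mpr (by linarith)
      rw [Real.sinh_neg] at h1
      nlinarith
  linarith

set_option maxHeartbeats 1000000 in
lemma massCurve_eq (γ : ℝ) (hγ : 0 < γ) {s : ℝ} (hs1 : -1 < s) (hs2 : s < 1) :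
    massCurve γ s
      = 4 / Real.sqrt γ * (π/2 + Real.arctan (s / (Real.sqrt γ * Real.sqrt (1 - s^2)))) := by
  have hsγ : 0 < Real.sqrt γ := Real.sqrt_pos.mpr hγ
  have hγ' : Real.sqrt γ ^ 2 = γ := Real.sq_sqrt hγ.le
  have hss : 0 < 1 - s^2 := by nlinarith
  set t := Real.sqrt (1 - s^2) with ht
  have htpos : 0 < t := Real.sqrt_pos.mpr hss
  have ht2 : t^2 = 1 - s^2 := Real.sq_sqrt hss.le
  set k : ℝ := 2 * t with hkdef
  have hk : 0 < k := by positivity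
  have hk2 : k^2 = 4 - 4*s^2 := by rw [hkdef]; nlinarith [ht2]
  -- the inner sqrt of the cosh argument
  have hksqrt : Real.sqrt (4 * 1 - (2*s)^2) = k := by
    rw [show (4:ℝ) * 1 - (2*s)^2 = (2*t)^2 by nlinarith [ht2]]
    rw [Real.sqrt_sq (by positivity)]
  set B : ℝ := Real.sqrt ((2*s)^2 + γ * (4 * 1 - (2*s)^2)) with hBdef
  have hargpos : 0 < (2*s)^2 + γ * (4 * 1 - (2*s)^2) := by nlinarith
  have hB : 0 < B := Real.sqrt_pos.mpr hargpos
  have hB2 : B^2 = (2*s)^2 + γ * k^2 := by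
    rw [hBdef, Real.sq_sqrt hargpos.le, hk2]; ring
  have hBc : 2*s < B := by
    by_contra h
    push_neg at h
    nlinarith
  have hpos : ∀ x : ℝ, 0 < B * Real.cosh (k*x) - 2*s := by
    intro x
    nlinarith [Real.one_le_cosh (k*x), hB]
  -- integrand
  set g : ℝ → ℝ := fun x => 2*k^2 / (B * Real.cosh (k*x) - 2*s) with hgdef
  have hPhi : ∀ x : ℝ, (Phi γ 1 (2*s) x)^2 = g x := by
    intro x
    rw [Phi, if_neg (by rw [Real.sqrt_one]; intro h; nlinarith [h])]
    rw [hksqrt, ← hBdef]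
    rw [Real.sq_sqrt]
    · rw [hgdef]
      congr 1
      nlinarith [hk2]
    · apply div_nonneg (by nlinarith) (hpos x).le
  -- antiderivative
  set G : ℝ → ℝ := fun x => 4 / Real.sqrt γ *
      Real.arctan ((B * Real.exp (k*x) - 2*s) / (Real.sqrt γ * k)) with hGdef
  have hderiv : ∀ x : ℝ, HasDerivAt G (g x) x := by
    intro x
    have h1 : HasDerivAt (fun x : ℝ => k*x) k x := by
      simpa using (hasDerivAt_id x).const_mul k
    have h2 : HasDerivAt (fun x : ℝ => Real.exp (k*x)) (Real.exp (k*x) * k) x :=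
      (Real.hasDerivAt_exp (k*x)).comp x h1
    have h3 : HasDerivAt (fun x : ℝ => (B * Real.exp (k*x) - 2*s) / (Real.sqrt γ * k))
        (B * (Real.exp (k*x) * k) / (Real.sqrt γ * k)) x :=
      ((h2.const_mul B).sub_const (2*s)).div_const _
    have h4 := (Real.hasDerivAt_arctan ((B * Real.exp (k*x) - 2*s) / (Real.sqrt γ * k))).comp x h3
    have h5 := h4.const_mul (4 / Real.sqrt γ)
    refine h5.congr_deriv (Eq.symm ?_)
    -- identity
    set E := Real.exp (k*x) with hE
    have hEpos : 0 < E := Real.exp_pos _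
    have hCe : 2*E*(B*Real.cosh (k*x) - 2*s) = B*E^2 - 4*s*E + B := by
      rw [Real.cosh_eq, Real.exp_neg, ← hE]
      field_simp
      ring
    rw [hgdef]
    show 2*k^2 / (B * Real.cosh (k*x) - 2*s) =
      4 / Real.sqrt γ * (1 / (1 + ((B*E - 2*s)/(Real.sqrt γ * k))^2) *
        (B * (E * k) / (Real.sqrt γ * k)))
    rw [eq_comm]
    have hD := hpos x
    have hden2 : (Real.sqrt γ * k)^2 + (B*E - 2*s)^2 = 2*B*E*(B*Real.cosh (k*x) - 2*s) := by
      linear_combination k^2 * hγ' - hB2 - B * hCe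
    have hu : 1 + ((B*E - 2*s)/(Real.sqrt γ * k))^2
        = 2*B*E*(B*Real.cosh (k*x) - 2*s) / (Real.sqrt γ * k)^2 := by
      rw [← hden2, add_div, div_self (by positivity), div_pow]
    rw [hu]
    field_simp
    ring
  -- integrability
  have hgcont : Continuous g := by
    apply continuous_const.div
    · fun_prop
    · exact fun x => (hpos x).ne'
  set m : ℝ := min (B - 2*s) (B*k^2/2) with hm
  have hmpos : 0 < m := lt_min (by linarith) (by positivity)
  have hint : Integrable g := by
    apply Integrable.mono' ((integrable_inv_one_add_sq).const_mul (2*k^2/m))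
      hgcont.aestronglyMeasurable
    filter_upwards with x
    rw [Real.norm_of_nonneg (le_of_lt (div_pos (by positivity) (hpos x)))]
    have hch : 1 + (k*x)^2/2 ≤ Real.cosh (k*x) := cosh_quad _
    have hden : m * (1 + x^2) ≤ B * Real.cosh (k*x) - 2*s := by
      have h1 : m ≤ B - 2*s := min_le_left _ _
      have h2 : m ≤ B*k^2/2 := min_le_right _ _
      have g1 := mul_le_mul_of_nonneg_left hch hB.le
      have g2 := mul_le_mul_of_nonneg_right h2 (sq_nonneg x)
      nlinarith [g1, g2, h1]
    have h3 : (0:ℝ) < 1 + x^2 := by positivity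
    calc 2*k^2 / (B * Real.cosh (k*x) - 2*s) ≤ 2*k^2 / (m * (1+x^2)) := by
          gcongr
      _ = 2*k^2/m * (1+x^2)⁻¹ := by
          rw [div_eq_mul_inv, div_eq_mul_inv, mul_inv, ← mul_assoc]
  -- limits
  have htop : Tendsto G atTop (𝓝 (4 / Real.sqrt γ * (π/2))) := by
    apply Tendsto.const_mul
    have h1 : Tendsto (fun x : ℝ => (B * Real.exp (k*x) - 2*s) / (Real.sqrt γ * k))
        atTop atTop := by
      apply Tendsto.atTop_div_const (by positivity)
      have h2 : Tendsto (fun x : ℝ => B * Real.exp (k*x)) atTop atTop := by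
        apply Tendsto.const_mul_atTop hB
        exact Real.tendsto_exp_atTop.comp (Tendsto.const_mul_atTop hk tendsto_id)
      simpa [sub_eq_add_neg] using tendsto_atTop_add_const_right atTop (-(2*s)) h2
    exact (tendsto_nhds_of_tendsto_nhdsWithin Real.tendsto_arctan_atTop).comp h1
  have harc : Tendsto (fun x : ℝ => (B * Real.exp (k*x) - 2*s) / (Real.sqrt γ * k)) atBot
      (𝓝 ((B * 0 - 2*s) / (Real.sqrt γ * k))) := by
    apply Tendsto.div_const
    apply Tendsto.sub_const
    apply Tendsto.const_mul
    exact Real.tendsto_exp_atBot.comp (Tendsto.const_mul_atBot hk tendsto_id)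
  have hbot : Tendsto G atBot
      (𝓝 (4 / Real.sqrt γ * Real.arctan ((B * 0 - 2*s) / (Real.sqrt γ * k)))) :=
    ((Real.continuous_arctan.tendsto _).comp harc).const_mul _
  have hI : ∫ x : ℝ, g x = 4 / Real.sqrt γ * (π/2)
      - 4 / Real.sqrt γ * Real.arctan ((B * 0 - 2*s) / (Real.sqrt γ * k)) :=
    integral_of_hasDerivAt_of_tendsto hderiv hint hbot htop
  have hmc : massCurve γ s = ∫ x : ℝ, g x := by
    rw [massCurve]; congr 1; funext x; exact hPhi x
  have hdivs : (2*s) / (Real.sqrt γ * k) = s / (Real.sqrt γ * t) := by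
    rw [hkdef]
    rw [show Real.sqrt γ * (2*t) = 2*(Real.sqrt γ * t) by ring]
    rw [mul_div_mul_left _ _ (two_ne_zero)]
  rw [hmc, hI, show B * 0 - 2*s = -(2*s) by ring, neg_div, Real.arctan_neg, hdivs]
  ring

lemma massCurve_one (γ : ℝ) (hγ : 0 < γ) : massCurve γ 1 = 4 * π / Real.sqrt γ := by
  have hsγ : 0 < Real.sqrt γ := Real.sqrt_pos.mpr hγ
  have hγ' : Real.sqrt γ ^ 2 = γ := Real.sq_sqrt hγ.le
  have hPhi : ∀ x : ℝ, (Phi γ 1 (2*1) x)^2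
      = (8/γ) * ((fun y : ℝ => (1 + y^2)⁻¹) ((2/Real.sqrt γ) * x)) := by
    intro x
    rw [Phi, if_pos (by rw [Real.sqrt_one])]
    rw [Real.sq_sqrt]
    · have hden : (0:ℝ) < (2*1*x)^2 + γ := by positivity
      rw [eq_comm]
      field_simp
      ring_nf
      rw [hγ']; ring
    · positivity
  rw [massCurve]
  rw [show (fun x : ℝ => (Phi γ 1 (2*1) x)^2)
      = fun x : ℝ => (8/γ) * ((fun y : ℝ => (1 + y^2)⁻¹) ((2/Real.sqrt γ) * x)) from funext hPhi]
  rw [MeasureTheory.integral_const_mul]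
  rw [MeasureTheory.Measure.integral_comp_mul_left (fun y : ℝ => (1 + y^2)⁻¹) (2/Real.sqrt γ)]
  rw [integral_univ_inv_one_add_sq]
  rw [smul_eq_mul, abs_of_nonneg (by positivity)]
  rw [eq_comm]
  field_simp
  ring_nf
  nlinarith [hγ', pi_pos]

lemma main_aux (γ : ℝ) (hγ : 0 < γ) :
    ContinuousOn (massCurve γ) (Ioc (-1) 1) ∧
    StrictMonoOn (massCurve γ) (Ioc (-1) 1) ∧
    BijOn (massCurve γ) (Ioc (-1) 1) (Ioc 0 (4 * Real.pi / Real.sqrt γ)) := by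
  have hsγ : 0 < Real.sqrt γ := Real.sqrt_pos.mpr hγ
  set w : ℝ → ℝ := fun s => s / (Real.sqrt γ * Real.sqrt (1 - s^2)) with hwdef
  set F : ℝ → ℝ := fun s => 4 / Real.sqrt γ * (π/2 + Real.arctan (w s)) with hFdef
  have hmF : ∀ s ∈ Ioo (-1:ℝ) 1, massCurve γ s = F s := fun s hs =>
    massCurve_eq γ hγ hs.1 hs.2
  have h1 : massCurve γ 1 = 4 * π / Real.sqrt γ := massCurve_one γ hγ
  -- w in terms of tan/arcsin
  have hw : ∀ s : ℝ, w s = Real.tan (Real.arcsin s) / Real.sqrt γ := by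
    intro s
    rw [hwdef]
    rw [Real.tan_arcsin, div_div, mul_comm]
  -- monotonicity of w
  have hwmono : ∀ a ∈ Ioo (-1:ℝ) 1, ∀ b ∈ Ioo (-1:ℝ) 1, a < b → w a < w b := by
    intro a ha b hb hab
    rw [hw a, hw b]
    have h1a : Real.arcsin a ∈ Ioo (-(π/2)) (π/2) :=
      ⟨Real.neg_pi_div_two_lt_arcsin.mpr ha.1, Real.arcsin_lt_pi_div_two.mpr ha.2⟩
    have h1b : Real.arcsin b ∈ Ioo (-(π/2)) (π/2) :=
      ⟨Real.neg_pi_div_two_lt_arcsin.mpr hb.1, Real.arcsin_lt_pi_div_two.mpr hb.2⟩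
    have harc : Real.arcsin a < Real.arcsin b :=
      Real.strictMonoOn_arcsin ⟨ha.1.le, ha.2.le⟩ ⟨hb.1.le, hb.2.le⟩ hab
    have htan := Real.strictMonoOn_tan h1a h1b harc
    gcongr
  -- F bounded above
  have hFlt : ∀ s : ℝ, F s < 4 * π / Real.sqrt γ := by
    intro s
    have := Real.arctan_lt_pi_div_two (w s)
    calc F s < 4 / Real.sqrt γ * π := by
          apply mul_lt_mul_of_pos_left (by linarith) (by positivity)
      _ = 4 * π / Real.sqrt γ := by ring
  have hFpos : ∀ s : ℝ, 0 < F s := by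
    intro s
    have := Real.neg_pi_div_two_lt_arctan (w s)
    apply mul_pos (by positivity) (by linarith)
  -- strict monotonicity
  have hmono : StrictMonoOn (massCurve γ) (Ioc (-1) 1) := by
    intro a ha b hb hab
    rcases eq_or_lt_of_le hb.2 with hb1 | hb1
    · rw [hb1, h1, hmF a ⟨ha.1, lt_of_lt_of_le hab (hb1 ▸ hb.2)⟩]
      exact hFlt a
    · rw [hmF a ⟨ha.1, lt_trans hab hb1⟩, hmF b ⟨hb.1, hb1⟩]
      have := hwmono a ⟨ha.1, lt_trans hab hb1⟩ b ⟨hb.1, hb1⟩ hab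
      have harct := Real.arctan_strictMono this
      apply mul_lt_mul_of_pos_left (by linarith) (by positivity)
  -- continuity
  have hcont : ContinuousOn (massCurve γ) (Ioc (-1) 1) := by
    intro x hx
    by_cases hx1 : x = 1
    · subst hx1
      rw [← Ioo_union_right (by norm_num : (-1:ℝ) < 1)]
      apply ContinuousWithinAt.union _ continuousWithinAt_singleton
      unfold ContinuousWithinAt
      rw [h1]
      have hEq : F =ᶠ[𝓝[Ioo (-1:ℝ) 1] 1] massCurve γ :=
        eventuallyEq_of_mem self_mem_nhdsWithin (fun s hs => (hmF s hs).symm)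
      apply Tendsto.congr' hEq
      -- Tendsto F (𝓝[Ioo (-1) 1] 1) (𝓝 (4π/√γ))
      have hwt : Tendsto w (𝓝[Ioo (-1:ℝ) 1] 1) atTop := by
        have hnum : Tendsto (fun s : ℝ => s) (𝓝[Ioo (-1:ℝ) 1] 1) (𝓝 1) :=
          (continuous_id.tendsto 1).mono_left nhdsWithin_le_nhds
        have hden : Tendsto (fun s : ℝ => Real.sqrt γ * Real.sqrt (1 - s^2))
            (𝓝[Ioo (-1:ℝ) 1] 1) (𝓝[>] 0) := by
          rw [tendsto_nhdsWithin_iff]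
          constructor
          · have hc : Continuous (fun s : ℝ => Real.sqrt γ * Real.sqrt (1 - s^2)) := by
              fun_prop
            have := (hc.tendsto 1).mono_left (nhdsWithin_le_nhds (s := Ioo (-1:ℝ) 1))
            simpa using this
          · filter_upwards [self_mem_nhdsWithin] with s hs
            have : (0:ℝ) < 1 - s^2 := by nlinarith [hs.1, hs.2]
            have := Real.sqrt_pos.mpr this
            exact mem_Ioi.mpr (by positivity)
        have hinv : Tendsto (fun s : ℝ => (Real.sqrt γ * Real.sqrt (1 - s^2))⁻¹)
            (𝓝[Ioo (-1:ℝ) 1] 1) atTop := hden.inv_tendsto_nhdsGT_zero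
        have := hnum.pos_mul_atTop one_pos hinv
        · simpa [hwdef, div_eq_mul_inv] using this
      have harct : Tendsto (fun s => Real.arctan (w s)) (𝓝[Ioo (-1:ℝ) 1] 1) (𝓝 (π/2)) :=
        (tendsto_nhds_of_tendsto_nhdsWithin Real.tendsto_arctan_atTop).comp hwt
      have hFt : Tendsto F (𝓝[Ioo (-1:ℝ) 1] 1) (𝓝 (4 / Real.sqrt γ * (π/2 + π/2))) :=
        (tendsto_const_nhds.add harct).const_mul _
      have : 4 / Real.sqrt γ * (π/2 + π/2) = 4 * π / Real.sqrt γ := by ring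
      rwa [this] at hFt
    · have hxIoo : x ∈ Ioo (-1:ℝ) 1 := ⟨hx.1, lt_of_le_of_ne hx.2 hx1⟩
      apply ContinuousAt.continuousWithinAt
      have h0 : (0:ℝ) < 1 - x^2 := by nlinarith [hxIoo.1, hxIoo.2]
      have hFat : ContinuousAt F x := by
        apply ContinuousAt.mul continuousAt_const
        apply ContinuousAt.add continuousAt_const
        apply Real.continuous_arctan.continuousAt.comp
        apply ContinuousAt.div continuousAt_id
        · exact (continuous_const.mul
            (Real.continuous_sqrt.comp (continuous_const.sub (continuous_pow 2)))).continuousAt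
        · have := Real.sqrt_pos.mpr h0
          positivity
      exact hFat.congr (eventuallyEq_of_mem (isOpen_Ioo.mem_nhds hxIoo)
        (fun s hs => (hmF s hs).symm))
  refine ⟨hcont, hmono, ?_, hmono.injOn, ?_⟩
  · -- MapsTo
    intro s hs
    by_cases hs1 : s = 1
    · subst hs1
      rw [h1]
      exact ⟨by positivity, le_refl _⟩
    · have hsIoo : s ∈ Ioo (-1:ℝ) 1 := ⟨hs.1, lt_of_le_of_ne hs.2 hs1⟩
      rw [hmF s hsIoo]
      exact ⟨hFpos s, (hFlt s).le⟩
  · -- SurjOn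
    intro y hy
    rcases eq_or_lt_of_le hy.2 with htopc | hlt
    · exact ⟨1, ⟨by norm_num, le_refl 1⟩, by rw [h1, ← htopc]⟩
    · set θ := y * Real.sqrt γ / 4 - π/2 with hθdef
      have hθ1 : -(π/2) < θ := by
        have : 0 < y * Real.sqrt γ / 4 := div_pos (mul_pos hy.1 hsγ) (by norm_num)
        · rw [hθdef]; linarith [hy.1]
      have hθ2 : θ < π/2 := by
        have h4 : y * Real.sqrt γ < (4 * π / Real.sqrt γ) * Real.sqrt γ :=
          mul_lt_mul_of_pos_right hlt hsγ
        have h5 : (4 * π / Real.sqrt γ) * Real.sqrt γ = 4 * π := by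
          field_simp
        rw [hθdef]; rw [h5] at h4; linarith
      set v := Real.sqrt γ * Real.tan θ with hvdef
      have h1v : Real.sqrt (1 + v^2) ^ 2 = 1 + v^2 := Real.sq_sqrt (by positivity)
      have h1vpos : 0 < Real.sqrt (1 + v^2) := Real.sqrt_pos.mpr (by positivity)
      set s := v / Real.sqrt (1 + v^2) with hsdef
      have hs2 : s^2 = v^2 / (1 + v^2) := by rw [hsdef, div_pow, h1v]
      have hslt : s^2 < 1 := by
        rw [hs2, div_lt_one (by positivity)]; linarith
      have hsIoo : s ∈ Ioo (-1:ℝ) 1 := by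
        constructor
        · nlinarith [hslt]
        · nlinarith [hslt]
      have h1ms : 1 - s^2 = (1 + v^2)⁻¹ := by
        rw [hs2]; field_simp; ring
      have hsq : Real.sqrt (1 - s^2) = (Real.sqrt (1 + v^2))⁻¹ := by
        rw [h1ms, Real.sqrt_inv]
      have hkey : w s = Real.tan θ := by
        rw [hwdef]
        show s / (Real.sqrt γ * Real.sqrt (1 - s^2)) = Real.tan θ
        rw [hsq, hsdef, hvdef]
        field_simp
      refine ⟨s, ⟨hsIoo.1, hsIoo.2.le⟩, ?_⟩
      rw [hmF s hsIoo, hFdef]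
      show 4 / Real.sqrt γ * (π/2 + Real.arctan (w s)) = y
      rw [hkey, Real.arctan_tan hθ1 hθ2, hθdef]
      field_simp
      ring

/-- For `b > -3/16` (so `γ > 0`), the map `s ↦ M(φ_{1,2s})` is continuous, strictly
increasing, and maps `(-1, 1]` bijectively onto `(0, 4π/√γ]`. -/
theorem stmt_6 (b γ : ℝ) (hb : -3 / 16 < b) (hγ : γ = 1 + 16 / 3 * b) :
    ContinuousOn (massCurve γ) (Ioc (-1) 1) ∧
    StrictMonoOn (massCurve γ) (Ioc (-1) 1) ∧
    BijOn (massCurve γ) (Ioc (-1) 1) (Ioc 0 (4 * Real.pi / Real.sqrt γ)) := by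
  have hγ0 : 0 < γ := by rw [hγ]; linarith
  exact main_aux γ hγ0
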